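/- Let n ≥ 1 and let λ, π be real numbers with 0 < 2λ < π, and set ψ = arcosh(π/(2λ)) > 0. Let Z be the n×n tridiagonal Toeplitz matrix with diagonal entries π, first off-diagonal entries λ, and zeros elsewhere. Define the n×n matrix M by M_{kl} = (−1)^{k+l} · sinh(ψ·min(k,l)) · sinh(ψ·(n+1−max(k,l))) / (λ · sinh(ψ) · sinh(ψ(n+1))) for 1 ≤ k, l ≤ n. Then Z is invertible and M = Z⁻¹, i.e., Z·M = M·Z = I. -/

import Mathlib

open Matrix Real

/-- The inverse hyperbolic cosine: arcosh x = log (x + sqrt (x^2 - 1)). -/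
noncomputable def arcosh (x : ℝ) : ℝ := Real.log (x + Real.sqrt (x ^ 2 - 1))

private lemma cosh_arcosh {x : ℝ} (hx : 1 ≤ x) : Real.cosh (_root_.arcosh x) = x := by
  have h1 : (0:ℝ) ≤ x ^ 2 - 1 := by nlinarith
  have hs : Real.sqrt (x ^ 2 - 1) ^ 2 = x ^ 2 - 1 := Real.sq_sqrt h1
  have hs0 : 0 ≤ Real.sqrt (x ^ 2 - 1) := Real.sqrt_nonneg _
  have ht : 0 < x + Real.sqrt (x ^ 2 - 1) := by linarith
  have hinv : (x + Real.sqrt (x ^ 2 - 1))⁻¹ = x - Real.sqrt (x ^ 2 - 1) := by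
    rw [inv_eq_one_div, eq_comm, eq_div_iff ht.ne']
    nlinarith
  rw [_root_.arcosh, Real.cosh_eq, Real.exp_log ht, Real.exp_neg, Real.exp_log ht, hinv]
  ring

private lemma sinh_three (X ψ : ℝ) :
    Real.sinh (X - ψ) + Real.sinh (X + ψ) = 2 * Real.cosh ψ * Real.sinh X := by
  rw [Real.sinh_add, Real.sinh_sub]; ring

private lemma sinh_prod (A B ψ : ℝ) :
    Real.sinh (A + ψ) * Real.sinh (B - A + ψ) - Real.sinh A * Real.sinh (B - A)
      = Real.sinh ψ * Real.sinh (B + ψ) := by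
  have h1 := Real.cosh_sq_sub_sinh_sq ψ
  have h2 := Real.cosh_sq_sub_sinh_sq A
  rw [show B - A + ψ = (B + ψ) - A from by ring]
  simp only [Real.sinh_add, Real.sinh_sub, Real.cosh_add, Real.cosh_sub]
  linear_combination (Real.sinh A * Real.cosh A * Real.sinh B - Real.sinh A ^ 2 * Real.cosh B) * h1 +
    (Real.sinh ψ * (Real.cosh ψ * Real.sinh B + Real.sinh ψ * Real.cosh B)) * h2

private noncomputable def G (ψ lam : ℝ) (n a b : ℕ) : ℝ :=
  (-1:ℝ) ^ (a + b) * Real.sinh (ψ * ((min a b : ℕ) : ℝ)) *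
    Real.sinh (ψ * ((n:ℝ) + 1 - ((max a b : ℕ) : ℝ))) /
    (lam * Real.sinh ψ * Real.sinh (ψ * ((n:ℝ) + 1)))

private lemma hG0 (ψ lam : ℝ) (n b : ℕ) : G ψ lam n 0 b = 0 := by
  simp [G]

private lemma hGn (ψ lam : ℝ) (n b : ℕ) (hb : b ≤ n + 1) : G ψ lam n (n+1) b = 0 := by
  unfold G
  rw [max_eq_left hb]
  push_cast
  rw [show (n:ℝ) + 1 - ((n:ℝ) + 1) = 0 from by ring]
  simp

private lemma key_rec (ψ lam piv : ℝ) (n a b : ℕ)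
    (hpiv : piv = 2 * lam * Real.cosh ψ)
    (hlam0 : lam ≠ 0) (hs0 : Real.sinh ψ ≠ 0)
    (hsn0 : Real.sinh (ψ * ((n:ℝ) + 1)) ≠ 0)
    (ha : a < n) (hb1 : 1 ≤ b) (hb2 : b ≤ n) :
    lam * G ψ lam n a b + piv * G ψ lam n (a+1) b + lam * G ψ lam n (a+2) b
      = if a + 1 = b then 1 else 0 := by
  have hε1 : (-1:ℝ)^(a+1+b) = -((-1:ℝ)^(a+b)) := by
    rw [show a+1+b = (a+b)+1 from by ring, pow_succ]; ring
  have hε2 : (-1:ℝ)^(a+2+b) = (-1:ℝ)^(a+b) := by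
    rw [show a+2+b = (a+b)+2 from by ring, pow_add]; norm_num
  rcases lt_trichotomy (a+1) b with h | h | h
  · rw [if_neg (by omega)]
    unfold G
    rw [min_eq_left (by omega : a ≤ b), min_eq_left (by omega : a+1 ≤ b),
        min_eq_left (by omega : a+2 ≤ b),
        max_eq_right (by omega : a ≤ b), max_eq_right (by omega : a+1 ≤ b),
        max_eq_right (by omega : a+2 ≤ b), hε1, hε2, hpiv]
    push_cast
    rw [show ψ * (a:ℝ) = ψ * ((a:ℝ)+1) - ψ from by ring,
        show ψ * ((a:ℝ)+2) = ψ * ((a:ℝ)+1) + ψ from by ring]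
    have h3 := sinh_three (ψ * ((a:ℝ)+1)) ψ
    linear_combination ((-1:ℝ)^(a+b) * Real.sinh (ψ * ((n:ℝ)+1-(b:ℝ))) * lam /
      (lam * Real.sinh ψ * Real.sinh (ψ * ((n:ℝ)+1)))) * h3
  · subst h
    rw [if_pos rfl]
    unfold G
    rw [min_eq_left (by omega : a ≤ a+1), min_self, min_eq_right (by omega : a+1 ≤ a+2),
        max_eq_right (by omega : a ≤ a+1), max_self, max_eq_left (by omega : a+1 ≤ a+2)]
    have e1 : (-1:ℝ)^(a+(a+1)) = -1 := by
      rw [show a+(a+1) = 2*a+1 from by ring, pow_succ, pow_mul]; norm_num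
    have e2 : (-1:ℝ)^((a+1)+(a+1)) = 1 := by
      rw [show (a+1)+(a+1) = 2*(a+1) from by ring, pow_mul]; norm_num
    have e3 : (-1:ℝ)^((a+2)+(a+1)) = -1 := by
      rw [show (a+2)+(a+1) = 2*(a+1)+1 from by ring, pow_succ, pow_mul]; norm_num
    rw [e1, e2, e3, hpiv]
    push_cast
    rw [show ψ * (a:ℝ) = ψ*((a:ℝ)+1) - ψ from by ring,
        show ψ * ((n:ℝ)+1-((a:ℝ)+1)) = ψ*(n:ℝ) - ψ*((a:ℝ)+1) + ψ from by ring,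
        show ψ * ((n:ℝ)+1-((a:ℝ)+2)) = ψ*(n:ℝ) - ψ*((a:ℝ)+1) from by ring,
        show ψ * ((n:ℝ)+1) = ψ*(n:ℝ) + ψ from by ring] at *
    have h3 := sinh_three (ψ * ((a:ℝ)+1)) ψ
    have hp := sinh_prod (ψ * ((a:ℝ)+1)) (ψ * (n:ℝ)) ψ
    field_simp
    rw [show ψ * ((n:ℝ) - ((a:ℝ)+1) + 1) = ψ*(n:ℝ) - ψ*((a:ℝ)+1) + ψ by ring,
        show ψ * ((a:ℝ)+1-1) = ψ*((a:ℝ)+1) - ψ by ring,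
        show ψ * ((n:ℝ) - ((a:ℝ)+1)) = ψ*(n:ℝ) - ψ*((a:ℝ)+1) by ring,
        show ψ * ((n:ℝ)+1) = ψ*(n:ℝ) + ψ by ring, div_eq_iff hsn0]
    linear_combination
      (-(Real.sinh (ψ*(n:ℝ) - ψ*((a:ℝ)+1) + ψ))) * h3 + hp
  · rw [if_neg (by omega)]
    unfold G
    rw [min_eq_right (by omega : b ≤ a), min_eq_right (by omega : b ≤ a+1),
        min_eq_right (by omega : b ≤ a+2),
        max_eq_left (by omega : b ≤ a), max_eq_left (by omega : b ≤ a+1),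
        max_eq_left (by omega : b ≤ a+2), hε1, hε2, hpiv]
    push_cast
    rw [show ψ * ((n:ℝ)+1-(a:ℝ)) = ψ * ((n:ℝ)-(a:ℝ)) + ψ from by ring,
        show ψ * ((n:ℝ)+1-((a:ℝ)+1)) = ψ * ((n:ℝ)-(a:ℝ)) from by ring,
        show ψ * ((n:ℝ)+1-((a:ℝ)+2)) = ψ * ((n:ℝ)-(a:ℝ)) - ψ from by ring]
    have h3 := sinh_three (ψ * ((n:ℝ)-(a:ℝ))) ψ
    linear_combination ((-1:ℝ)^(a+b) * Real.sinh (ψ * (b:ℝ)) * lam /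
      (lam * Real.sinh ψ * Real.sinh (ψ * ((n:ℝ)+1)))) * h3

/-- Explicit inverse of a tridiagonal Toeplitz matrix with diagonal π and
off-diagonal λ, where π > 2λ > 0 and ψ = arcosh(π/(2λ)). -/
theorem stmt_1 (n : ℕ) (hn : 1 ≤ n) (lam piv : ℝ)
    (hlam : 0 < 2 * lam) (hπ : 2 * lam < piv)
    (ψ : ℝ) (hψ : ψ = _root_.arcosh (piv / (2 * lam)))
    (Z M : Matrix (Fin n) (Fin n) ℝ)
    (hZ : ∀ i j : Fin n,
      Z i j =
        if (i : ℕ) = (j : ℕ) then piv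
        else if ((i : ℤ) - (j : ℤ)).natAbs = 1 then lam
        else 0)
    (hM : ∀ i j : Fin n,
      M i j =
        (-1 : ℝ) ^ (((i : ℕ) + 1) + ((j : ℕ) + 1)) *
          Real.sinh (ψ * (min ((i : ℕ) + 1) ((j : ℕ) + 1) : ℝ)) *
          Real.sinh (ψ * ((n : ℝ) + 1 - (max ((i : ℕ) + 1) ((j : ℕ) + 1) : ℝ))) /
          (lam * Real.sinh ψ * Real.sinh (ψ * ((n : ℝ) + 1)))) :
    IsUnit Z ∧ Z⁻¹ = M ∧ Z * M = 1 ∧ M * Z = 1 := by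
  have hlam' : 0 < lam := by linarith
  have hx : 1 < piv / (2 * lam) := (one_lt_div hlam).mpr hπ
  have hψc : Real.cosh ψ = piv / (2 * lam) := by rw [hψ]; exact _root_.cosh_arcosh hx.le
  have hψpos : 0 < ψ := by
    rw [hψ, _root_.arcosh]
    apply Real.log_pos
    have := Real.sqrt_nonneg ((piv / (2*lam)) ^ 2 - 1)
    linarith
  have hpiv : piv = 2 * lam * Real.cosh ψ := by
    rw [hψc]; field_simp
  have hsψ : 0 < Real.sinh ψ := Real.sinh_pos_iff.mpr hψpos
  have hsn : 0 < Real.sinh (ψ * ((n:ℝ) + 1)) := Real.sinh_pos_iff.mpr (by positivity)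
  have hMg : ∀ i j : Fin n, M i j = G ψ lam n ((i:ℕ)+1) ((j:ℕ)+1) := by
    intro i j
    rw [hM]
    unfold G
    push_cast
    ring
  have hZM : Z * M = 1 := by
    ext k l
    rw [Matrix.mul_apply]
    have hk : (k:ℕ) < n := k.isLt
    have hl : (l:ℕ) < n := l.isLt
    have hsum : ∀ (c : ℝ) (m : ℕ),
        (∑ j : Fin n, if (j:ℕ) = m then c else 0) = if m < n then c else 0 := by
      intro c m
      by_cases hm : m < n
      · rw [if_pos hm, Finset.sum_eq_single (⟨m, hm⟩ : Fin n)]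
        · simp
        · intro j _ hj
          exact if_neg (fun h => hj (Fin.ext h))
        · intro h; exact absurd (Finset.mem_univ _) h
      · rw [if_neg hm, Finset.sum_eq_zero]
        intro j _
        exact if_neg (fun (h : (j:ℕ) = m) => hm (h ▸ j.isLt))
    have hsplit : ∀ j : Fin n, Z k j * M j l =
        (if (j:ℕ) = (k:ℕ) then piv * G ψ lam n ((k:ℕ)+1) ((l:ℕ)+1) else 0)
        + ((if (j:ℕ) = (k:ℕ)+1 then lam * G ψ lam n ((k:ℕ)+2) ((l:ℕ)+1) else 0)
        + (if (j:ℕ)+1 = (k:ℕ) then lam * G ψ lam n (k:ℕ) ((l:ℕ)+1) else 0)) := by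
      intro j
      rw [hZ k j, hMg j l]
      by_cases h1 : (k:ℕ) = (j:ℕ)
      · rw [if_pos h1, if_pos h1.symm, if_neg (by omega), if_neg (by omega), ← h1]
        ring
      · rw [if_neg h1]
        by_cases h2 : (j:ℕ) = (k:ℕ)+1
        · rw [if_pos (show ((k:ℤ)-(j:ℤ)).natAbs = 1 by omega),
            if_neg (show ¬(j:ℕ) = (k:ℕ) from fun h => h1 h.symm),
            if_pos h2, if_neg (show ¬(j:ℕ)+1 = (k:ℕ) by omega),
            show (j:ℕ)+1 = (k:ℕ)+2 from by omega]
          ring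
        · by_cases h3 : (j:ℕ)+1 = (k:ℕ)
          · rw [if_pos (show ((k:ℤ)-(j:ℤ)).natAbs = 1 by omega),
              if_neg (show ¬(j:ℕ) = (k:ℕ) from fun h => h1 h.symm),
              if_neg h2, if_pos h3, ← h3]
            ring
          · rw [if_neg (show ¬((k:ℤ)-(j:ℤ)).natAbs = 1 by omega),
              if_neg (show ¬(j:ℕ) = (k:ℕ) from fun h => h1 h.symm),
              if_neg h2, if_neg h3]
            ring
    have hsc : ∑ j : Fin n, Z k j * M j l
        = ∑ j : Fin n, ((if (j:ℕ) = (k:ℕ) then piv * G ψ lam n ((k:ℕ)+1) ((l:ℕ)+1) else 0)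
        + ((if (j:ℕ) = (k:ℕ)+1 then lam * G ψ lam n ((k:ℕ)+2) ((l:ℕ)+1) else 0)
        + (if (j:ℕ)+1 = (k:ℕ) then lam * G ψ lam n (k:ℕ) ((l:ℕ)+1) else 0))) :=
      Finset.sum_congr rfl (fun j _ => hsplit j)
    rw [hsc, Finset.sum_add_distrib, Finset.sum_add_distrib, hsum, hsum, if_pos hk]
    have h3rd : (∑ j : Fin n, if (j:ℕ)+1 = (k:ℕ) then lam * G ψ lam n (k:ℕ) ((l:ℕ)+1) else 0)
        = lam * G ψ lam n (k:ℕ) ((l:ℕ)+1) := by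
      rcases Nat.eq_zero_or_pos (k:ℕ) with hk0 | hk0
      · rw [Finset.sum_eq_zero (fun j _ => if_neg (by omega)), hk0, hG0, mul_zero]
      · have hc : (∑ j : Fin n, if (j:ℕ)+1 = (k:ℕ) then lam * G ψ lam n (k:ℕ) ((l:ℕ)+1) else 0)
            = ∑ j : Fin n, if (j:ℕ) = (k:ℕ)-1 then lam * G ψ lam n (k:ℕ) ((l:ℕ)+1) else 0 :=
          Finset.sum_congr rfl
            (fun j _ => if_congr (by omega : ((j:ℕ)+1 = (k:ℕ)) ↔ ((j:ℕ) = (k:ℕ)-1)) rfl rfl)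
        rw [hc, hsum, if_pos (by omega)]
    rw [h3rd]
    have h2nd : (if (k:ℕ)+1 < n then lam * G ψ lam n ((k:ℕ)+2) ((l:ℕ)+1) else 0)
        = lam * G ψ lam n ((k:ℕ)+2) ((l:ℕ)+1) := by
      by_cases h : (k:ℕ)+1 < n
      · rw [if_pos h]
      · rw [if_neg h, show (k:ℕ)+2 = n+1 from by omega, hGn ψ lam n _ (by omega), mul_zero]
    rw [h2nd]
    have hkey := key_rec ψ lam piv n (k:ℕ) ((l:ℕ)+1) hpiv hlam'.ne' hsψ.ne' hsn.ne'
      hk (by omega) hl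
    rw [show piv * G ψ lam n ((k:ℕ)+1) ((l:ℕ)+1) +
        (lam * G ψ lam n ((k:ℕ)+2) ((l:ℕ)+1) + lam * G ψ lam n (k:ℕ) ((l:ℕ)+1))
        = lam * G ψ lam n (k:ℕ) ((l:ℕ)+1) + piv * G ψ lam n ((k:ℕ)+1) ((l:ℕ)+1)
          + lam * G ψ lam n ((k:ℕ)+2) ((l:ℕ)+1) from by ring, hkey]
    rw [Matrix.one_apply]
    by_cases h : k = l
    · rw [if_pos (by omega : (k:ℕ)+1 = (l:ℕ)+1), if_pos h]
    · rw [if_neg (fun hh => h (Fin.ext (by omega))), if_neg h]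
  have hZt : Zᵀ = Z := by
    ext i j
    rw [Matrix.transpose_apply, hZ, hZ]
    split_ifs <;> first | rfl | (exfalso; omega)
  have hMt : Mᵀ = M := by
    ext i j
    rw [Matrix.transpose_apply, hM, hM, add_comm ((j:ℕ)+1), min_comm, max_comm]
  have hMZ : M * Z = 1 := by
    have := congrArg Matrix.transpose hZM
    rw [Matrix.transpose_mul, hZt, hMt, Matrix.transpose_one] at this
    exact this
  refine ⟨⟨⟨Z, M, hZM, hMZ⟩, rfl⟩, Matrix.inv_eq_right_inv hZM, hZM, hMZ⟩
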